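/- Assume the bipartite Bloch data of the context and that ρ is separable. Then for all positive integers p_1, p_2, q_1, q_2 and all real column vectors u ∈ ℝ^{p_1}, v ∈ ℝ^{p_2}, α ∈ ℝ^{q_1}, β ∈ ℝ^{q_2}, the block matrix M = [[u·v^T, u·(β ⊗ T^{(B)})^T], [(α ⊗ T^{(A)})·v^T, (α·β^T) ⊗ T^{(AB)}]] (of size (p_1 + q_1(d_A²−1)) × (p_2 + q_2(d_B²−1)), where ⊗ is the Kronecker product and real vectors are regarded as complex) satisfies ‖M‖_tr ≤ √( (‖u‖_F² + ‖α‖_F²·(d_A²−d_A)/κ_A) · (‖v‖_F² + ‖β‖_F²·(d_B²−d_B)/κ_B) ). -/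

import Mathlib

open Matrix ComplexOrder
open scoped Kronecker

/-- The trace norm `‖A‖_tr = Tr((A†A)^{1/2})` of a complex matrix (the sum of its
singular values). -/
noncomputable def traceNorm {m n : Type*} [Fintype m] [Fintype n] [DecidableEq n]
    (A : Matrix m n ℂ) : ℝ :=
  ((Matrix.posSemidef_conjTranspose_mul_self A).1.eigenvectorUnitary.1 *
      diagonal (((↑) : ℝ → ℂ) ∘ (√·) ∘ (Matrix.posSemidef_conjTranspose_mul_self A).1.eigenvalues) *
      (star (Matrix.posSemidef_conjTranspose_mul_self A).1.eigenvectorUnitary : Matrix n n ℂ)).trace.re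

lemma traceNorm_eq_sum_sqrt {m n : Type*} [Fintype m] [Fintype n] [DecidableEq n]
    (A : Matrix m n ℂ) :
    traceNorm A =
      ∑ k, Real.sqrt ((Matrix.posSemidef_conjTranspose_mul_self A).1.eigenvalues k) := by
  unfold traceNorm
  rw [Matrix.trace_mul_comm, ← Matrix.mul_assoc]
  rw [show (star (Matrix.posSemidef_conjTranspose_mul_self A).1.eigenvectorUnitary
      : Matrix n n ℂ) * ((Matrix.posSemidef_conjTranspose_mul_self A).1.eigenvectorUnitary : Matrix n n ℂ) = 1 from
    Unitary.coe_star_mul_self _]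
  rw [Matrix.one_mul, Matrix.trace_diagonal]
  simp [Complex.re_sum]

lemma traceNorm_nonneg {m n : Type*} [Fintype m] [Fintype n] [DecidableEq n]
    (A : Matrix m n ℂ) : 0 ≤ traceNorm A := by
  rw [traceNorm_eq_sum_sqrt]
  exact Finset.sum_nonneg fun k _ => Real.sqrt_nonneg _

lemma traceNorm_le_of_posSemidef_fromBlocks {m n : Type*} [Fintype m] [Fintype n]
    [DecidableEq m] [DecidableEq n]
    (A : Matrix m n ℂ) (P : Matrix m m ℂ) (Q : Matrix n n ℂ)
    (h : (Matrix.fromBlocks P A Aᴴ Q).PosSemidef) :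
    traceNorm A ≤ (P.trace.re + Q.trace.re) / 2 := by
  classical
  set hB := Matrix.posSemidef_conjTranspose_mul_self A with hBdef
  set hH := hB.1
  set μ : n → ℝ := hH.eigenvalues with hμdef
  have hμ0 : ∀ k, 0 ≤ μ k := hB.eigenvalues_nonneg
  set V : Matrix n n ℂ := (hH.eigenvectorUnitary : Matrix n n ℂ) with hVdef
  have hVU : Vᴴ * V = 1 := by
    rw [← Matrix.star_eq_conjTranspose]
    exact hH.eigenvectorUnitary.2.1
  have hUV : V * Vᴴ = 1 := by
    rw [← Matrix.star_eq_conjTranspose]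
    exact hH.eigenvectorUnitary.2.2
  have hspec : Aᴴ * A = V * Matrix.diagonal (Complex.ofReal ∘ μ) * Vᴴ := by
    have := hH.spectral_theorem
    simpa [← Matrix.star_eq_conjTranspose] using this
  set v : n → n → ℂ := fun k j => V j k with hvdef
  -- eigen equation
  have hAAv : ∀ k, (Aᴴ * A) *ᵥ v k = (μ k : ℂ) • v k := by
    intro k
    funext j
    have : ((Aᴴ * A) * V) j k = (V * Matrix.diagonal (Complex.ofReal ∘ μ)) j k := by
      rw [hspec, Matrix.mul_assoc, hVU, Matrix.mul_one]
    simpa [Matrix.mul_apply, Matrix.mulVec, dotProduct, Matrix.diagonal,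
      Finset.mul_sum, mul_comm] using this
  have hvv : ∀ k l, star (v k) ⬝ᵥ v l = if k = l then 1 else 0 := by
    intro k l
    have h1 : (Vᴴ * V) k l = (1 : Matrix n n ℂ) k l := by rw [hVU]
    simpa [Matrix.mul_apply, Matrix.conjTranspose_apply, Matrix.one_apply,
      dotProduct, Pi.star_apply, v] using h1
  set σ : n → ℝ := fun k => Real.sqrt (μ k) with hσdef
  set x : n → m → ℂ := fun k =>
    if μ k = 0 then 0 else (((σ k : ℝ) : ℂ))⁻¹ • (A *ᵥ v k) with hxdef
  have hAvAv : ∀ k l, star (A *ᵥ v k) ⬝ᵥ (A *ᵥ v l) = (μ l : ℂ) * (if k = l then 1 else 0) := by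
    intro k l
    rw [Matrix.star_mulVec, Matrix.dotProduct_mulVec, Matrix.vecMul_vecMul,
      ← Matrix.dotProduct_mulVec, hAAv, dotProduct_smul, hvv, smul_eq_mul]
  have hσsq : ∀ k, μ k = σ k * σ k := fun k => (Real.mul_self_sqrt (hμ0 k)).symm
  have hxAv : ∀ k, star (x k) ⬝ᵥ (A *ᵥ v k) = (σ k : ℂ) := by
    intro k
    by_cases hk : μ k = 0
    · simp [hxdef, hk, hσdef, Real.sqrt_eq_zero'.mpr (le_of_eq hk)]
    · have hσne : (σ k : ℝ) ≠ 0 := by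
        simp only [hσdef]
        exact Real.sqrt_ne_zero'.mpr (lt_of_le_of_ne (hμ0 k) (Ne.symm hk))
      simp only [hxdef, if_neg hk]
      rw [star_smul, smul_dotProduct, hAvAv k k, if_pos rfl, mul_one]
      rw [star_inv₀, Complex.star_def, Complex.conj_ofReal]
      rw [hσsq k]
      push_cast
      simp only [smul_eq_mul]
      field_simp
  have hvAx : ∀ k, star (v k) ⬝ᵥ (Aᴴ *ᵥ x k) = (σ k : ℂ) := by
    intro k
    rw [Matrix.dotProduct_mulVec, ← Matrix.star_mulVec, Matrix.star_dotProduct, hxAv]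
    exact Complex.conj_ofReal _
  have hstarElim : ∀ (a : m → ℂ) (b : n → ℂ), star (Sum.elim a b) = Sum.elim (star a) (star b) := by
    intro a b; funext r; cases r <;> rfl
  have hquad : ∀ (a : m → ℂ) (b : n → ℂ),
      0 ≤ (star a ⬝ᵥ (P *ᵥ a) + star a ⬝ᵥ (A *ᵥ b) + star b ⬝ᵥ (Aᴴ *ᵥ a)
        + star b ⬝ᵥ (Q *ᵥ b)).re := by
    intro a b
    have h0 := h.dotProduct_mulVec_nonneg (Sum.elim a b)
    rw [Matrix.fromBlocks_mulVec, hstarElim, sumElim_dotProduct_sumElim,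
      dotProduct_add, dotProduct_add] at h0
    simp only [Sum.elim_comp_inl, Sum.elim_comp_inr] at h0
    have := (Complex.le_def.mp h0).1
    simpa [Complex.zero_re, add_assoc] using this
  have hper : ∀ k, 2 * σ k ≤ (star (x k) ⬝ᵥ (P *ᵥ x k)).re + (star (v k) ⬝ᵥ (Q *ᵥ v k)).re := by
    intro k
    have h0 := hquad (-(x k)) (v k)
    simp only [star_neg, Matrix.mulVec_neg, neg_dotProduct, dotProduct_neg,
      neg_neg] at h0
    rw [hxAv, hvAx] at h0
    have h1 : (star (x k) ⬝ᵥ (P *ᵥ x k) + -(σ k : ℂ) + -(σ k : ℂ)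
        + star (v k) ⬝ᵥ (Q *ᵥ v k)).re
        = (star (x k) ⬝ᵥ (P *ᵥ x k)).re + (star (v k) ⬝ᵥ (Q *ᵥ v k)).re - 2 * σ k := by
      simp [Complex.add_re, Complex.neg_re, Complex.ofReal_re]; ring
    rw [h1] at h0
    linarith
  have hsum : ∑ k, 2 * σ k
      ≤ (∑ k, (star (x k) ⬝ᵥ (P *ᵥ x k)).re) + ∑ k, (star (v k) ⬝ᵥ (Q *ᵥ v k)).re := by
    rw [← Finset.sum_add_distrib]
    exact Finset.sum_le_sum fun k _ => hper k
  -- Q side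
  have hQform : ∀ k, star (v k) ⬝ᵥ (Q *ᵥ v k) = (Vᴴ * Q * V) k k := by
    intro k
    simp only [dotProduct, Matrix.mulVec, Matrix.mul_apply,
      Matrix.conjTranspose_apply, Pi.star_apply, dotProduct, Finset.sum_mul,
      Finset.mul_sum]
    rw [Finset.sum_comm]
    exact Finset.sum_congr rfl fun j _ => Finset.sum_congr rfl fun i _ => by ring
  have hQtr : ∑ k, star (v k) ⬝ᵥ (Q *ᵥ v k) = Q.trace := by
    rw [Finset.sum_congr rfl fun k _ => hQform k]
    have : ∑ k, (Vᴴ * Q * V) k k = (Vᴴ * Q * V).trace := rfl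
    rw [this, Matrix.trace_mul_cycle, hUV, Matrix.one_mul]
  -- P side
  set U : Matrix m n ℂ := Matrix.of fun i k => x k i with hUdef
  have hPform : ∀ k, star (x k) ⬝ᵥ (P *ᵥ x k) = (Uᴴ * P * U) k k := by
    intro k
    simp only [dotProduct, Matrix.mulVec, Matrix.mul_apply,
      Matrix.conjTranspose_apply, Pi.star_apply, dotProduct, Finset.sum_mul,
      Finset.mul_sum, hUdef, Matrix.of_apply]
    rw [Finset.sum_comm]
    exact Finset.sum_congr rfl fun j _ => Finset.sum_congr rfl fun i _ => by ring
  have hUU : Uᴴ * U = Matrix.diagonal (fun k => if μ k = 0 then (0:ℂ) else 1) := by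
    ext k l
    have he : (Uᴴ * U) k l = star (x k) ⬝ᵥ x l := by
      simp [Matrix.mul_apply, Matrix.conjTranspose_apply, dotProduct, hUdef]
    rw [he, Matrix.diagonal_apply]
    by_cases hkl : k = l
    · subst hkl
      rw [if_pos rfl]
      by_cases hk : μ k = 0
      · simp [hxdef, hk]
      · simp only [hxdef, if_neg hk]
        rw [star_smul, smul_dotProduct, dotProduct_smul, hAvAv k k, if_pos rfl,
          star_inv₀, Complex.star_def, Complex.conj_ofReal, mul_one]
        have hσne : (σ k : ℝ) ≠ 0 := by
          simp only [hσdef]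
          exact Real.sqrt_ne_zero'.mpr (lt_of_le_of_ne (hμ0 k) (Ne.symm hk))
        rw [hσsq k]
        push_cast
        simp only [smul_eq_mul]
        field_simp
    · rw [if_neg hkl]
      by_cases hk : μ k = 0
      · simp [hxdef, hk]
      · by_cases hl : μ l = 0
        · simp [hxdef, hl]
        · simp only [hxdef, if_neg hk, if_neg hl]
          rw [star_smul, smul_dotProduct, dotProduct_smul, hAvAv k l, if_neg hkl]
          simp
  have hUdm : U * Matrix.diagonal (fun k => if μ k = 0 then (0:ℂ) else 1) = U := by
    ext i l
    rw [Matrix.mul_diagonal]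
    by_cases hl : μ l = 0
    · simp [hUdef, hxdef, hl]
    · simp [hl]
  have hR2 : (U * Uᴴ) * (U * Uᴴ) = U * Uᴴ := by
    rw [Matrix.mul_assoc, ← Matrix.mul_assoc Uᴴ, hUU, ← Matrix.mul_assoc, hUdm]
  have hRH : (U * Uᴴ)ᴴ = U * Uᴴ := by
    rw [Matrix.conjTranspose_mul, Matrix.conjTranspose_conjTranspose]
  set S := (1 : Matrix m m ℂ) - U * Uᴴ with hSdef
  have hS2 : S * S = S := by
    rw [hSdef, Matrix.sub_mul, Matrix.mul_sub, Matrix.mul_sub, Matrix.one_mul, Matrix.one_mul,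
      Matrix.mul_one, hR2]
    abel
  have hSH : Sᴴ = S := by
    rw [hSdef, Matrix.conjTranspose_sub, Matrix.conjTranspose_one, hRH]
  have hPpos : ∀ y : m → ℂ, 0 ≤ (star y ⬝ᵥ (P *ᵥ y)).re := by
    intro y
    have := hquad y 0
    simpa using this
  have hPS : 0 ≤ (P * S).trace.re := by
    have h1 : (P * S).trace = (S * P * S).trace := by
      conv_lhs => rw [← hS2, ← Matrix.mul_assoc]
      rw [Matrix.trace_mul_cycle]
    have h2 : (S * P * S).trace = ∑ k, star (fun j => S j k) ⬝ᵥ (P *ᵥ fun j => S j k) := by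
      have h3 : ∀ k, (S * P * S) k k = star (fun j => S j k) ⬝ᵥ (P *ᵥ fun j => S j k) := by
        intro k
        have hk : ∀ i, S k i = star (S i k) := by
          intro i
          conv_lhs => rw [← hSH]
          rfl
        simp only [Matrix.mul_apply, dotProduct, Matrix.mulVec, Pi.star_apply,
          dotProduct, Finset.sum_mul, Finset.mul_sum]
        rw [Finset.sum_comm]
        refine Finset.sum_congr rfl fun j _ => Finset.sum_congr rfl fun i _ => ?_
        rw [hk j]
        ring
      exact Finset.sum_congr rfl fun k _ => h3 k
    rw [h1, h2, Complex.re_sum]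
    exact Finset.sum_nonneg fun k _ => hPpos _
  have hPtr : ∑ k, star (x k) ⬝ᵥ (P *ᵥ x k) = (P * (U * Uᴴ)).trace := by
    rw [Finset.sum_congr rfl fun k _ => hPform k]
    have h4 : ∑ k, (Uᴴ * P * U) k k = (Uᴴ * P * U).trace := rfl
    rw [h4, Matrix.trace_mul_cycle, Matrix.trace_mul_comm]
  have hone : U * Uᴴ + S = 1 := by rw [hSdef]; abel
  have hsplit : P.trace = (P * (U * Uᴴ)).trace + (P * S).trace := by
    rw [← Matrix.trace_add, ← Matrix.mul_add, hone, Matrix.mul_one]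
  have hPbound : ∑ k, (star (x k) ⬝ᵥ (P *ᵥ x k)).re ≤ P.trace.re := by
    have h1 : ∑ k, (star (x k) ⬝ᵥ (P *ᵥ x k)).re = (P * (U * Uᴴ)).trace.re := by
      rw [← Complex.re_sum, hPtr]
    rw [h1, hsplit]
    simp only [Complex.add_re]
    linarith
  have hQbound : ∑ k, (star (v k) ⬝ᵥ (Q *ᵥ v k)).re = Q.trace.re := by
    rw [← Complex.re_sum, hQtr]
  have htn : traceNorm A = ∑ k, σ k := traceNorm_eq_sum_sqrt A
  have h2σ : ∑ k, 2 * σ k = 2 * ∑ k, σ k := by rw [Finset.mul_sum]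
  rw [htn]
  rw [h2σ] at hsum
  linarith



lemma posSemidef_sum_fin {ι : Type*} [Fintype ι] {n : Type*} [Fintype n]
    (f : ι → Matrix n n ℂ) (h : ∀ i, (f i).PosSemidef) : (∑ i, f i).PosSemidef := by
  refine Matrix.PosSemidef.of_dotProduct_mulVec_nonneg ?_ ?_
  · unfold Matrix.IsHermitian
    rw [Matrix.conjTranspose_sum]
    exact Finset.sum_congr rfl fun i _ => (h i).1
  · intro x
    have h1 : (∑ i, f i) *ᵥ x = ∑ i, (f i *ᵥ x) := by
      funext j
      simp only [Matrix.mulVec, dotProduct, Finset.sum_apply, Finset.sum_mul,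
        Matrix.sum_apply]
      rw [Finset.sum_comm]
    rw [h1]
    have h2 : star x ⬝ᵥ ∑ i, (f i *ᵥ x) = ∑ i, star x ⬝ᵥ (f i *ᵥ x) := by
      simp only [dotProduct, Finset.mul_sum, Finset.sum_apply]
      rw [Finset.sum_comm]
    rw [h2]
    exact Finset.sum_nonneg fun i _ => (h i).dotProduct_mulVec_nonneg x

lemma posSemidef_smul_ofReal {n : Type*} [Fintype n] (A : Matrix n n ℂ) (c : ℝ) (hc : 0 ≤ c)
    (hA : A.PosSemidef) : ((c : ℂ) • A).PosSemidef := by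
  refine Matrix.PosSemidef.of_dotProduct_mulVec_nonneg ?_ ?_
  · unfold Matrix.IsHermitian
    rw [Matrix.conjTranspose_smul, hA.1]
    congr 1
    simp [Complex.star_def, Complex.conj_ofReal]
  · intro x
    rw [Matrix.smul_mulVec, dotProduct_smul, smul_eq_mul]
    exact mul_nonneg (by simpa using hc) (hA.dotProduct_mulVec_nonneg x)

lemma trace_conjTranspose_mul {d : ℕ} (A B : Matrix (Fin d) (Fin d) ℂ) :
    (Aᴴ * B).trace = ∑ p : Fin d × Fin d, (starRingEnd ℂ) (A p.1 p.2) * B p.1 p.2 := by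
  rw [Matrix.trace, Fintype.sum_prod_type]
  simp only [Matrix.diag_apply, Matrix.mul_apply, Matrix.conjTranspose_apply]
  rw [Finset.sum_comm]
  exact Finset.sum_congr rfl fun i _ => Finset.sum_congr rfl fun j _ => rfl

lemma bessel_bound (d : ℕ) (hd : 1 ≤ d) (κ : ℝ) (hκ : 0 < κ)
    (G : Fin (d ^ 2 - 1) → Matrix (Fin d) (Fin d) ℂ)
    (hGtr : ∀ i, (G i).trace = 0)
    (hGorth : ∀ i j, ((G i)ᴴ * G j).trace = if i = j then (κ : ℂ) else 0)
    (σ : Matrix (Fin d) (Fin d) ℂ) (hσ : σ.PosSemidef) (hσtr : σ.trace = 1)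
    (hσp : σ * σ = σ) :
    ∑ k, Complex.normSq (((d : ℂ) / κ) * ((G k)ᴴ * σ).trace) ≤ ((d : ℝ) ^ 2 - d) / κ := by
  classical
  set E := EuclideanSpace ℂ (Fin d × Fin d)
  set emb : Matrix (Fin d) (Fin d) ℂ → E := fun A => (WithLp.equiv 2 _).symm (fun p => A p.1 p.2)
    with hembdef
  have hinner : ∀ A B, (inner ℂ (emb A) (emb B) : ℂ) = (Aᴴ * B).trace := by
    intro A B
    rw [trace_conjTranspose_mul]
    rw [PiLp.inner_apply]
    exact Finset.sum_congr rfl fun p _ => by rw [mul_comm]; rfl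
  have hd0 : (0:ℝ) < d := by exact_mod_cast hd
  have hsd : Real.sqrt d ≠ 0 := ne_of_gt (Real.sqrt_pos.mpr hd0)
  have hsκ : Real.sqrt κ ≠ 0 := ne_of_gt (Real.sqrt_pos.mpr hκ)
  set f : Option (Fin (d ^ 2 - 1)) → E := fun o =>
    o.elim (((Real.sqrt d : ℝ) : ℂ)⁻¹ • emb 1) (fun k => (((Real.sqrt κ : ℝ) : ℂ)⁻¹ • emb (G k)))
    with hfdef
  have hone : ((1 : Matrix (Fin d) (Fin d) ℂ)ᴴ * 1).trace = (d : ℂ) := by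
    simp [Matrix.trace_one]
  have horth : Orthonormal ℂ f := by
    rw [orthonormal_iff_ite]
    intro i j
    cases i with
    | none => cases j with
      | none =>
        simp only [hfdef, Option.elim, inner_smul_left, inner_smul_right, hinner, hone]
        rw [map_inv₀, Complex.conj_ofReal, if_pos trivial]
        have hr : ((Real.sqrt d)⁻¹ * ((Real.sqrt d)⁻¹ * (d:ℝ)) : ℝ) = 1 := by
          rw [← mul_assoc, ← mul_inv, Real.mul_self_sqrt hd0.le]
          field_simp
        exact_mod_cast hr
      | some l =>
        simp only [hfdef, Option.elim, inner_smul_left, inner_smul_right, hinner]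
        rw [Matrix.conjTranspose_one, Matrix.one_mul, hGtr l]
        simp
    | some k => cases j with
      | none =>
        simp only [hfdef, Option.elim, inner_smul_left, inner_smul_right, hinner]
        have : ((G k)ᴴ * 1).trace = 0 := by
          rw [Matrix.mul_one, Matrix.trace_conjTranspose, hGtr k, star_zero]
        rw [this]
        simp
      | some l =>
        simp only [hfdef, Option.elim, inner_smul_left, inner_smul_right, hinner, hGorth k l]
        rw [map_inv₀, Complex.conj_ofReal]
        by_cases hkl : k = l
        · subst hkl
          rw [if_pos rfl, if_pos rfl]
          have hr : ((Real.sqrt κ)⁻¹ * ((Real.sqrt κ)⁻¹ * κ) : ℝ) = 1 := by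
            rw [← mul_assoc, ← mul_inv, Real.mul_self_sqrt hκ.le]
            field_simp
          exact_mod_cast hr
        · simp [hkl, Option.some_inj]
  have hbessel := horth.sum_inner_products_le (emb σ) (s := Finset.univ)
  have hnσ : ‖emb σ‖ ^ 2 = 1 := by
    rw [← inner_self_eq_norm_sq (𝕜 := ℂ)]
    have h1 : (inner ℂ (emb σ) (emb σ) : ℂ) = 1 := by
      rw [hinner, hσ.1, hσp, hσtr]
    rw [h1]
    simp
  rw [hnσ, Fintype.sum_option] at hbessel
  have h1σ : (inner ℂ (f none) (emb σ) : ℂ) = ((Real.sqrt d : ℝ) : ℂ)⁻¹ := by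
    simp only [hfdef, Option.elim, inner_smul_left, hinner]
    rw [Matrix.conjTranspose_one, Matrix.one_mul, hσtr, map_inv₀, Complex.conj_ofReal, mul_one]
  have h2σ : ∀ k, (inner ℂ (f (some k)) (emb σ) : ℂ)
      = ((Real.sqrt κ : ℝ) : ℂ)⁻¹ * ((G k)ᴴ * σ).trace := by
    intro k
    simp only [hfdef, Option.elim, inner_smul_left, hinner]
    rw [map_inv₀, Complex.conj_ofReal]
  rw [h1σ] at hbessel
  have hbessel2 : ∑ k, ‖((G k)ᴴ * σ).trace‖ ^ 2 / κ ≤ 1 - 1 / d := by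
    have e1 : ‖((Real.sqrt d : ℝ) : ℂ)⁻¹‖ ^ 2 = 1 / d := by
      rw [norm_inv, Complex.norm_real, Real.norm_eq_abs, abs_of_nonneg (Real.sqrt_nonneg _)]
      rw [inv_pow, Real.sq_sqrt hd0.le, one_div]
    have e2 : ∀ k, ‖(inner ℂ (f (some k)) (emb σ) : ℂ)‖ ^ 2 = ‖((G k)ᴴ * σ).trace‖ ^ 2 / κ := by
      intro k
      rw [h2σ, norm_mul, mul_pow, norm_inv, Complex.norm_real, Real.norm_eq_abs,
        abs_of_nonneg (Real.sqrt_nonneg _), inv_pow, Real.sq_sqrt hκ.le]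
      ring
    rw [e1, Finset.sum_congr rfl fun k _ => e2 k] at hbessel
    linarith
  have hfinal : ∑ k, Complex.normSq (((d : ℂ) / κ) * ((G k)ᴴ * σ).trace)
      = ((d:ℝ)^2 / κ^2) * ∑ k, ‖((G k)ᴴ * σ).trace‖ ^ 2 := by
    rw [Finset.mul_sum]
    refine Finset.sum_congr rfl fun k _ => ?_
    rw [Complex.normSq_mul, Complex.normSq_eq_norm_sq, Complex.normSq_eq_norm_sq]
    have : ‖((d : ℂ) / κ)‖ = d / κ := by
      rw [norm_div, Complex.norm_natCast, Complex.norm_real, Real.norm_of_nonneg hκ.le]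
    rw [this]
    field_simp
  rw [hfinal]
  have hκ2 : (0:ℝ) < κ^2 := by positivity
  rw [div_eq_mul_inv ((d:ℝ)^2 - d)]
  calc (d:ℝ)^2 / κ^2 * ∑ k, ‖((G k)ᴴ * σ).trace‖ ^ 2
      ≤ (d:ℝ)^2 / κ^2 * (κ * (1 - 1/d)) := by
        apply mul_le_mul_of_nonneg_left _ (by positivity)
        have := hbessel2
        have h3 : ∑ k, ‖((G k)ᴴ * σ).trace‖ ^ 2 / κ = (∑ k, ‖((G k)ᴴ * σ).trace‖ ^ 2) / κ := by
          rw [Finset.sum_div]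
        rw [h3] at this
        calc ∑ k, ‖((G k)ᴴ * σ).trace‖ ^ 2 = (∑ k, ‖((G k)ᴴ * σ).trace‖ ^ 2) / κ * κ := by
              field_simp
          _ ≤ (1 - 1/d) * κ := mul_le_mul_of_nonneg_right this hκ.le
          _ = κ * (1 - 1/d) := by ring
    _ = ((d:ℝ)^2 - d) * κ⁻¹ := by field_simp

lemma trace_pair_rep {dA dB nA nB : ℕ}
    (GA : Fin nA → Matrix (Fin dA) (Fin dA) ℂ)
    (GB : Fin nB → Matrix (Fin dB) (Fin dB) ℂ)
    (TA : Fin nA → ℂ) (TB : Fin nB → ℂ) (TAB : Matrix (Fin nA) (Fin nB) ℂ)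
    (ρ : Matrix (Fin dA × Fin dB) (Fin dA × Fin dB) ℂ)
    (hrep : ρ = (((dA : ℂ) * dB))⁻¹ •
      ((1 : Matrix (Fin dA) (Fin dA) ℂ) ⊗ₖ (1 : Matrix (Fin dB) (Fin dB) ℂ)
        + ∑ i, TA i • (GA i ⊗ₖ (1 : Matrix (Fin dB) (Fin dB) ℂ))
        + ∑ j, TB j • ((1 : Matrix (Fin dA) (Fin dA) ℂ) ⊗ₖ GB j)
        + ∑ i, ∑ j, TAB i j • (GA i ⊗ₖ GB j)))
    (X : Matrix (Fin dA) (Fin dA) ℂ) (Y : Matrix (Fin dB) (Fin dB) ℂ) :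
    ((X ⊗ₖ Y) * ρ).trace = (((dA : ℂ) * dB))⁻¹ *
      (X.trace * Y.trace
        + (∑ i, TA i * ((X * GA i).trace * Y.trace))
        + (∑ j, TB j * (X.trace * (Y * GB j).trace))
        + ∑ i, ∑ j, TAB i j * ((X * GA i).trace * (Y * GB j).trace)) := by
  subst hrep
  rw [Matrix.mul_smul, Matrix.trace_smul, smul_eq_mul]
  congr 1
  rw [Matrix.mul_add, Matrix.mul_add, Matrix.mul_add, Matrix.trace_add, Matrix.trace_add,
    Matrix.trace_add]
  congr 1
  congr 1
  congr 1
  · rw [← Matrix.mul_kronecker_mul, Matrix.mul_one, Matrix.mul_one, Matrix.trace_kronecker]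
  · rw [Matrix.mul_sum, Matrix.trace_sum]
    refine Finset.sum_congr rfl fun i _ => ?_
    rw [mul_smul_comm, Matrix.trace_smul, ← Matrix.mul_kronecker_mul, Matrix.mul_one,
      Matrix.trace_kronecker, smul_eq_mul]
  · rw [Matrix.mul_sum, Matrix.trace_sum]
    refine Finset.sum_congr rfl fun j _ => ?_
    rw [mul_smul_comm, Matrix.trace_smul, ← Matrix.mul_kronecker_mul, Matrix.mul_one,
      Matrix.trace_kronecker, smul_eq_mul]
  · rw [Matrix.mul_sum, Matrix.trace_sum]
    refine Finset.sum_congr rfl fun i _ => ?_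
    rw [Matrix.mul_sum, Matrix.trace_sum]
    refine Finset.sum_congr rfl fun j _ => ?_
    rw [mul_smul_comm, Matrix.trace_smul, ← Matrix.mul_kronecker_mul,
      Matrix.trace_kronecker, smul_eq_mul]

lemma trace_pair_sep {dA dB Mn : ℕ}
    (w : Fin Mn → ℝ)
    (σ : Fin Mn → Matrix (Fin dA) (Fin dA) ℂ)
    (τ : Fin Mn → Matrix (Fin dB) (Fin dB) ℂ)
    (ρ : Matrix (Fin dA × Fin dB) (Fin dA × Fin dB) ℂ)
    (hρ : ρ = ∑ i, (w i : ℂ) • (σ i ⊗ₖ τ i))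
    (X : Matrix (Fin dA) (Fin dA) ℂ) (Y : Matrix (Fin dB) (Fin dB) ℂ) :
    ((X ⊗ₖ Y) * ρ).trace = ∑ i, (w i : ℂ) * ((X * σ i).trace * (Y * τ i).trace) := by
  subst hρ
  rw [Matrix.mul_sum, Matrix.trace_sum]
  refine Finset.sum_congr rfl fun i _ => ?_
  rw [mul_smul_comm, Matrix.trace_smul, ← Matrix.mul_kronecker_mul, Matrix.trace_kronecker,
    smul_eq_mul]

set_option maxHeartbeats 1000000 in
/-- (Theorem 1 of the paper.) If the bipartite state `ρ` is separable,
then for all real vectors `u, v, α, β` the extended correlation tensor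
`[[u vᵀ, u (β ⊗ T^{(B)})ᵀ], [(α ⊗ T^{(A)}) vᵀ, (α βᵀ) ⊗ T^{(AB)}]]` has trace norm at most
`√((‖u‖_F² + ‖α‖_F²(d_A²−d_A)/κ_A)·(‖v‖_F² + ‖β‖_F²(d_B²−d_B)/κ_B))`. -/
theorem stmt_2
    (dA dB : ℕ) (hdA : 1 ≤ dA) (hdB : 1 ≤ dB)
    (κA κB : ℝ) (hκA : 0 < κA) (hκB : 0 < κB)
    (GA : Fin (dA ^ 2 - 1) → Matrix (Fin dA) (Fin dA) ℂ)
    (GB : Fin (dB ^ 2 - 1) → Matrix (Fin dB) (Fin dB) ℂ)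
    (hGAtr : ∀ i, (GA i).trace = 0)
    (hGAorth : ∀ i j, ((GA i)ᴴ * GA j).trace = if i = j then (κA : ℂ) else 0)
    (hGBtr : ∀ i, (GB i).trace = 0)
    (hGBorth : ∀ i j, ((GB i)ᴴ * GB j).trace = if i = j then (κB : ℂ) else 0)
    (ρ : Matrix (Fin dA × Fin dB) (Fin dA × Fin dB) ℂ)
    (hρ : ρ.PosSemidef) (hρtr : ρ.trace = 1)
    (TA : Fin (dA ^ 2 - 1) → ℂ) (TB : Fin (dB ^ 2 - 1) → ℂ)
    (TAB : Matrix (Fin (dA ^ 2 - 1)) (Fin (dB ^ 2 - 1)) ℂ)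
    (hrep : ρ = (((dA : ℂ) * dB))⁻¹ •
      ((1 : Matrix (Fin dA) (Fin dA) ℂ) ⊗ₖ (1 : Matrix (Fin dB) (Fin dB) ℂ)
        + ∑ i, TA i • (GA i ⊗ₖ (1 : Matrix (Fin dB) (Fin dB) ℂ))
        + ∑ j, TB j • ((1 : Matrix (Fin dA) (Fin dA) ℂ) ⊗ₖ GB j)
        + ∑ i, ∑ j, TAB i j • (GA i ⊗ₖ GB j)))
    (hsep : ∃ (M : ℕ) (w : Fin M → ℝ)
        (σ : Fin M → Matrix (Fin dA) (Fin dA) ℂ)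
        (τ : Fin M → Matrix (Fin dB) (Fin dB) ℂ),
      (∀ i, 0 ≤ w i) ∧ (∑ i, w i = 1) ∧
      (∀ i, (σ i).PosSemidef ∧ (σ i).trace = 1 ∧ σ i * σ i = σ i) ∧
      (∀ i, (τ i).PosSemidef ∧ (τ i).trace = 1 ∧ τ i * τ i = τ i) ∧
      ρ = ∑ i, (w i : ℂ) • (σ i ⊗ₖ τ i))
    :
    ∀ (p₁ p₂ q₁ q₂ : ℕ), 1 ≤ p₁ → 1 ≤ p₂ → 1 ≤ q₁ → 1 ≤ q₂ →
    ∀ (u : Fin p₁ → ℝ) (v : Fin p₂ → ℝ) (α : Fin q₁ → ℝ) (β : Fin q₂ → ℝ),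
      traceNorm (Matrix.fromBlocks
          (Matrix.of fun a b => ((u a * v b : ℝ) : ℂ))
          (Matrix.of fun (a : Fin p₁) (jc : Fin q₂ × Fin (dB ^ 2 - 1)) =>
            ((u a : ℝ) : ℂ) * (((β jc.1 : ℝ) : ℂ) * TB jc.2))
          (Matrix.of fun (ic : Fin q₁ × Fin (dA ^ 2 - 1)) (b : Fin p₂) =>
            (((α ic.1 : ℝ) : ℂ) * TA ic.2) * ((v b : ℝ) : ℂ))
          (Matrix.of fun (ic : Fin q₁ × Fin (dA ^ 2 - 1)) (jc : Fin q₂ × Fin (dB ^ 2 - 1)) =>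
            ((α ic.1 * β jc.1 : ℝ) : ℂ) * TAB ic.2 jc.2))
        ≤ Real.sqrt ((∑ a, u a ^ 2 + (∑ a, α a ^ 2) * (((dA : ℝ) ^ 2 - dA) / κA)) *
            (∑ b, v b ^ 2 + (∑ b, β b ^ 2) * (((dB : ℝ) ^ 2 - dB) / κB))) := by
  intro p₁ p₂ q₁ q₂ hp₁ hp₂ hq₁ hq₂ u v α β
  obtain ⟨Mn, w, σ, τ, hw0, hw1, hσ, hτ, hρsep⟩ := hsep
  have hdA1 : (1:ℝ) ≤ (dA:ℝ) := by exact_mod_cast hdA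
  have hdB1 : (1:ℝ) ≤ (dB:ℝ) := by exact_mod_cast hdB
  have hdA0 : (dA:ℂ) ≠ 0 := by exact_mod_cast Nat.pos_of_ne_zero (by omega) |>.ne'
  have hdB0 : (dB:ℂ) ≠ 0 := by exact_mod_cast Nat.pos_of_ne_zero (by omega) |>.ne'
  have hκA0 : (κA:ℂ) ≠ 0 := by exact_mod_cast hκA.ne'
  have hκB0 : (κB:ℂ) ≠ 0 := by exact_mod_cast hκB.ne'
  set s : Fin Mn → Fin (dA ^ 2 - 1) → ℂ :=
    fun i k => ((dA:ℂ)/κA) * ((GA k)ᴴ * σ i).trace with hsdef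
  set t : Fin Mn → Fin (dB ^ 2 - 1) → ℂ :=
    fun i l => ((dB:ℂ)/κB) * ((GB l)ᴴ * τ i).trace with htdef
  have hGAconj : ∀ k, ((GA k)ᴴ).trace = 0 := fun k => by
    rw [Matrix.trace_conjTranspose, hGAtr k, star_zero]
  have hGBconj : ∀ l, ((GB l)ᴴ).trace = 0 := fun l => by
    rw [Matrix.trace_conjTranspose, hGBtr l, star_zero]
  have hσtr : ∀ i, (σ i).trace = 1 := fun i => (hσ i).2.1
  have hτtr : ∀ i, (τ i).trace = 1 := fun i => (hτ i).2.1
  have hrepT := trace_pair_rep GA GB TA TB TAB ρ hrep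
  have hsepT := trace_pair_sep w σ τ ρ hρsep
  have htr1A : (1 : Matrix (Fin dA) (Fin dA) ℂ).trace = (dA:ℂ) := by
    rw [Matrix.trace_one]; simp
  have htr1B : (1 : Matrix (Fin dB) (Fin dB) ℂ).trace = (dB:ℂ) := by
    rw [Matrix.trace_one]; simp
  have hw1C : ∑ i, (w i : ℂ) = 1 := by
    have := congrArg (Complex.ofReal) hw1
    push_cast at this
    exact this
  -- moment identities
  have hTA : ∀ k, TA k = ∑ i, (w i : ℂ) * s i k := by
    intro k
    have h1 := (hrepT (GA k)ᴴ 1).symm.trans (hsepT (GA k)ᴴ 1)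
    simp only [hGAconj, hGAorth, htr1B, Matrix.one_mul, hGBtr, hτtr, hσtr, mul_zero, zero_mul,
      mul_one, one_mul, add_zero, zero_add, Finset.sum_const_zero, ite_mul, mul_ite,
      Finset.sum_ite_eq, Finset.mem_univ, if_true] at h1
    have h4 : ∑ i, (w i:ℂ) * s i k = ((dA:ℂ)/κA) * ∑ i, (w i:ℂ) * ((GA k)ᴴ * σ i).trace := by
      rw [Finset.mul_sum]
      exact Finset.sum_congr rfl fun i _ => by rw [hsdef]; ring
    rw [h4, ← h1]
    field_simp
  have hTB : ∀ l, TB l = ∑ i, (w i : ℂ) * t i l := by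
    intro l
    have h1 := (hrepT 1 (GB l)ᴴ).symm.trans (hsepT 1 (GB l)ᴴ)
    simp only [hGBconj, hGBorth, htr1A, Matrix.one_mul, hGAtr, hτtr, hσtr, mul_zero, zero_mul,
      mul_one, one_mul, add_zero, zero_add, Finset.sum_const_zero, ite_mul, mul_ite,
      Finset.sum_ite_eq, Finset.mem_univ, if_true] at h1
    have h4 : ∑ i, (w i:ℂ) * t i l = ((dB:ℂ)/κB) * ∑ i, (w i:ℂ) * ((GB l)ᴴ * τ i).trace := by
      rw [Finset.mul_sum]
      exact Finset.sum_congr rfl fun i _ => by rw [htdef]; ring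
    rw [h4, ← h1]
    field_simp
  have hTAB : ∀ k l, TAB k l = ∑ i, (w i : ℂ) * (s i k * t i l) := by
    intro k l
    have h1 := (hrepT (GA k)ᴴ (GB l)ᴴ).symm.trans (hsepT (GA k)ᴴ (GB l)ᴴ)
    simp only [hGAconj, hGBconj, hGAorth, hGBorth, Matrix.one_mul, hτtr, hσtr, mul_zero,
      zero_mul, mul_one, one_mul, add_zero, zero_add, Finset.sum_const_zero, ite_mul, mul_ite,
      Finset.sum_ite_eq, Finset.mem_univ, if_true] at h1
    have h4 : ∑ i, (w i:ℂ) * (s i k * t i l)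
        = ((dA:ℂ)/κA) * ((dB:ℂ)/κB) * ∑ i, (w i:ℂ)
            * (((GA k)ᴴ * σ i).trace * ((GB l)ᴴ * τ i).trace) := by
      rw [Finset.mul_sum]
      exact Finset.sum_congr rfl fun i _ => by rw [hsdef, htdef]; ring
    rw [h4, ← h1]
    field_simp
  have hsBound : ∀ i, ∑ k, Complex.normSq (s i k) ≤ ((dA:ℝ)^2 - dA)/κA := by
    intro i
    have h0 := bessel_bound dA hdA κA hκA GA hGAtr hGAorth (σ i) (hσ i).1 (hσ i).2.1 (hσ i).2.2
    simpa [hsdef] using h0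
  have htBound : ∀ i, ∑ l, Complex.normSq (t i l) ≤ ((dB:ℝ)^2 - dB)/κB := by
    intro i
    have h0 := bessel_bound dB hdB κB hκB GB hGBtr hGBorth (τ i) (hτ i).1 (hτ i).2.1 (hτ i).2.2
    simpa [htdef] using h0
  set X := ∑ a, u a ^ 2 + (∑ a, α a ^ 2) * (((dA : ℝ) ^ 2 - dA) / κA) with hXdef
  set Y := ∑ b, v b ^ 2 + (∑ b, β b ^ 2) * (((dB : ℝ) ^ 2 - dB) / κB) with hYdef
  have hdAfree : (0:ℝ) ≤ ((dA:ℝ)^2 - dA)/κA := by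
    apply div_nonneg _ hκA.le
    nlinarith
  have hdBfree : (0:ℝ) ≤ ((dB:ℝ)^2 - dB)/κB := by
    apply div_nonneg _ hκB.le
    nlinarith
  have hXnn : 0 ≤ X := by
    rw [hXdef]
    apply add_nonneg (Finset.sum_nonneg fun a _ => sq_nonneg _)
    exact mul_nonneg (Finset.sum_nonneg fun a _ => sq_nonneg _) hdAfree
  have hYnn : 0 ≤ Y := by
    rw [hYdef]
    apply add_nonneg (Finset.sum_nonneg fun b _ => sq_nonneg _)
    exact mul_nonneg (Finset.sum_nonneg fun b _ => sq_nonneg _) hdBfree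
  set xv : Fin Mn → (Fin p₁ ⊕ Fin q₁ × Fin (dA ^ 2 - 1)) → ℂ :=
    fun i => Sum.elim (fun a => ((u a : ℝ) : ℂ)) (fun k => ((α k.1 : ℝ) : ℂ) * s i k.2)
    with hxvdef
  set yv : Fin Mn → (Fin p₂ ⊕ Fin q₂ × Fin (dB ^ 2 - 1)) → ℂ :=
    fun i => Sum.elim (fun b => ((v b : ℝ) : ℂ)) (fun l => ((β l.1 : ℝ) : ℂ) * t i l.2)
    with hyvdef
  have hxnorm : ∀ i, ∑ r, Complex.normSq (xv i r) ≤ X := by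
    intro i
    rw [Fintype.sum_sum_type]
    have e1 : ∑ a, Complex.normSq (xv i (Sum.inl a)) = ∑ a, u a ^ 2 := by
      refine Finset.sum_congr rfl fun a _ => ?_
      simp [hxvdef, Complex.normSq_ofReal, sq]
    have e2 : ∑ p : Fin q₁ × Fin (dA ^ 2 - 1), Complex.normSq (xv i (Sum.inr p))
        = (∑ a, α a ^ 2) * ∑ k, Complex.normSq (s i k) := by
      rw [Finset.sum_mul_sum, Fintype.sum_prod_type]
      refine Finset.sum_congr rfl fun a _ => Finset.sum_congr rfl fun k _ => ?_
      simp [hxvdef, Complex.normSq_mul, Complex.normSq_ofReal, sq]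
    rw [e1, e2, hXdef]
    have := mul_le_mul_of_nonneg_left (hsBound i)
      (Finset.sum_nonneg fun a (_ : a ∈ Finset.univ) => sq_nonneg (α a))
    linarith
  have hynorm : ∀ i, ∑ r, Complex.normSq (yv i r) ≤ Y := by
    intro i
    rw [Fintype.sum_sum_type]
    have e1 : ∑ b, Complex.normSq (yv i (Sum.inl b)) = ∑ b, v b ^ 2 := by
      refine Finset.sum_congr rfl fun b _ => ?_
      simp [hyvdef, Complex.normSq_ofReal, sq]
    have e2 : ∑ p : Fin q₂ × Fin (dB ^ 2 - 1), Complex.normSq (yv i (Sum.inr p))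
        = (∑ b, β b ^ 2) * ∑ l, Complex.normSq (t i l) := by
      rw [Finset.sum_mul_sum, Fintype.sum_prod_type]
      refine Finset.sum_congr rfl fun b _ => Finset.sum_congr rfl fun l _ => ?_
      simp [hyvdef, Complex.normSq_mul, Complex.normSq_ofReal, sq]
    rw [e1, e2, hYdef]
    have := mul_le_mul_of_nonneg_left (htBound i)
      (Finset.sum_nonneg fun b (_ : b ∈ Finset.univ) => sq_nonneg (β b))
    linarith
  set Mmat := (Matrix.fromBlocks
          (Matrix.of fun a b => ((u a * v b : ℝ) : ℂ))
          (Matrix.of fun (a : Fin p₁) (jc : Fin q₂ × Fin (dB ^ 2 - 1)) =>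
            ((u a : ℝ) : ℂ) * (((β jc.1 : ℝ) : ℂ) * TB jc.2))
          (Matrix.of fun (ic : Fin q₁ × Fin (dA ^ 2 - 1)) (b : Fin p₂) =>
            (((α ic.1 : ℝ) : ℂ) * TA ic.2) * ((v b : ℝ) : ℂ))
          (Matrix.of fun (ic : Fin q₁ × Fin (dA ^ 2 - 1)) (jc : Fin q₂ × Fin (dB ^ 2 - 1)) =>
            ((α ic.1 * β jc.1 : ℝ) : ℂ) * TAB ic.2 jc.2)) with hMmatdef
  have hM : ∀ r c, (∑ i, (w i:ℂ) * (xv i r * yv i c)) = Mmat r c := by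
    intro r c
    rcases r with a | ak <;> rcases c with b | bl
    · have e : ∀ i, (w i:ℂ) * (xv i (Sum.inl a) * yv i (Sum.inl b))
          = ((u a : ℂ) * (v b : ℂ)) * (w i : ℂ) := by
        intro i; simp only [hxvdef, hyvdef, Sum.elim_inl]; ring
      rw [Finset.sum_congr rfl fun i _ => e i, ← Finset.mul_sum, hw1C, mul_one, hMmatdef]
      simp [Matrix.fromBlocks_apply₁₁]
    · have e : ∀ i, (w i:ℂ) * (xv i (Sum.inl a) * yv i (Sum.inr bl))
          = ((u a : ℂ) * (β bl.1 : ℂ)) * ((w i : ℂ) * t i bl.2) := by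
        intro i; simp only [hxvdef, hyvdef, Sum.elim_inl, Sum.elim_inr]; ring
      rw [Finset.sum_congr rfl fun i _ => e i, ← Finset.mul_sum, ← hTB bl.2, hMmatdef]
      simp [Matrix.fromBlocks_apply₁₂]
      ring
    · have e : ∀ i, (w i:ℂ) * (xv i (Sum.inr ak) * yv i (Sum.inl b))
          = ((α ak.1 : ℂ) * (v b : ℂ)) * ((w i : ℂ) * s i ak.2) := by
        intro i; simp only [hxvdef, hyvdef, Sum.elim_inl, Sum.elim_inr]; ring
      rw [Finset.sum_congr rfl fun i _ => e i, ← Finset.mul_sum, ← hTA ak.2, hMmatdef]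
      simp [Matrix.fromBlocks_apply₂₁]
      ring
    · have e : ∀ i, (w i:ℂ) * (xv i (Sum.inr ak) * yv i (Sum.inr bl))
          = ((α ak.1 : ℂ) * (β bl.1 : ℂ)) * ((w i : ℂ) * (s i ak.2 * t i bl.2)) := by
        intro i; simp only [hxvdef, hyvdef, Sum.elim_inr]; ring
      rw [Finset.sum_congr rfl fun i _ => e i, ← Finset.mul_sum, ← hTAB ak.2 bl.2, hMmatdef]
      simp [Matrix.fromBlocks_apply₂₂]
  have key : ∀ c : ℝ, 0 < c → traceNorm Mmat ≤ (c * X + c⁻¹ * Y) / 2 := by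
    intro c hc
    have hcinv : (0:ℝ) < c⁻¹ := by positivity
    have hsc : Real.sqrt c * Real.sqrt c = c := Real.mul_self_sqrt hc.le
    have hsc' : Real.sqrt c⁻¹ * Real.sqrt c⁻¹ = c⁻¹ := Real.mul_self_sqrt hcinv.le
    have hscc' : Real.sqrt c * Real.sqrt c⁻¹ = 1 := by
      rw [Real.sqrt_inv]
      exact mul_inv_cancel₀ (ne_of_gt (Real.sqrt_pos.mpr hc))
    have hscC : ((Real.sqrt c : ℝ) : ℂ) * ((Real.sqrt c : ℝ) : ℂ) = ((c:ℝ):ℂ) := by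
      rw [← Complex.ofReal_mul, hsc]
    have hsc'C : ((Real.sqrt c⁻¹ : ℝ) : ℂ) * ((Real.sqrt c⁻¹ : ℝ) : ℂ) = ((c⁻¹:ℝ):ℂ) := by
      rw [← Complex.ofReal_mul, hsc']
    have hscc'C : ((Real.sqrt c : ℝ) : ℂ) * ((Real.sqrt c⁻¹ : ℝ) : ℂ) = 1 := by
      rw [← Complex.ofReal_mul, hscc', Complex.ofReal_one]
    set z : Fin Mn → ((Fin p₁ ⊕ Fin q₁ × Fin (dA ^ 2 - 1))
        ⊕ (Fin p₂ ⊕ Fin q₂ × Fin (dB ^ 2 - 1))) → ℂ :=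
      fun i => Sum.elim (fun r => ((Real.sqrt c : ℝ) : ℂ) * xv i r)
        (fun r => ((Real.sqrt c⁻¹ : ℝ) : ℂ) * star (yv i r)) with hzdef
    set C : Fin Mn → Matrix (Fin 1) ((Fin p₁ ⊕ Fin q₁ × Fin (dA ^ 2 - 1))
        ⊕ (Fin p₂ ⊕ Fin q₂ × Fin (dB ^ 2 - 1))) ℂ :=
      fun i => Matrix.of (fun _ r => star (z i r)) with hCdef
    set F := ∑ i, (w i : ℂ) • ((C i)ᴴ * C i) with hFdef
    have hFpsd : F.PosSemidef := by
      rw [hFdef]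
      exact posSemidef_sum_fin _ fun i => posSemidef_smul_ofReal _ _ (hw0 i)
        (Matrix.posSemidef_conjTranspose_mul_self (C i))
    have hFentry : ∀ r r', F r r' = ∑ i, (w i:ℂ) * (z i r * star (z i r')) := by
      intro r r'
      rw [hFdef, Matrix.sum_apply]
      refine Finset.sum_congr rfl fun i _ => ?_
      rw [Matrix.smul_apply, smul_eq_mul]
      congr 1
      simp only [Matrix.mul_apply, Matrix.conjTranspose_apply, hCdef, Matrix.of_apply,
        Fin.sum_univ_one, star_star]
    set Pm : Matrix (Fin p₁ ⊕ Fin q₁ × Fin (dA ^ 2 - 1))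
        (Fin p₁ ⊕ Fin q₁ × Fin (dA ^ 2 - 1)) ℂ :=
      Matrix.of (fun r r' => ((c:ℝ):ℂ) * ∑ i, (w i:ℂ) * (xv i r * star (xv i r'))) with hPmdef
    set Qm : Matrix (Fin p₂ ⊕ Fin q₂ × Fin (dB ^ 2 - 1))
        (Fin p₂ ⊕ Fin q₂ × Fin (dB ^ 2 - 1)) ℂ :=
      Matrix.of (fun r r' => ((c⁻¹:ℝ):ℂ) * ∑ i, (w i:ℂ) * (star (yv i r) * yv i r')) with hQmdef
    have hFblocks : Matrix.fromBlocks Pm Mmat Mmatᴴ Qm = F := by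
      ext r r'
      rcases r with r | r <;> rcases r' with r' | r'
      · rw [hFentry]
        simp only [Matrix.fromBlocks_apply₁₁, hPmdef, Matrix.of_apply, hzdef, Sum.elim_inl]
        rw [Finset.mul_sum]
        refine Finset.sum_congr rfl fun i _ => ?_
        rw [star_mul', Complex.star_def, Complex.conj_ofReal]
        linear_combination (-((w i:ℂ) * (xv i r * (starRingEnd ℂ) (xv i r')))) * hscC
      · rw [hFentry]
        simp only [Matrix.fromBlocks_apply₁₂, hzdef, Sum.elim_inl, Sum.elim_inr]
        rw [← hM r r']
        refine Finset.sum_congr rfl fun i _ => ?_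
        rw [star_mul', Complex.star_def, Complex.conj_ofReal, Complex.conj_conj]
        linear_combination (-((w i:ℂ) * (xv i r * yv i r'))) * hscc'C
      · rw [hFentry, Matrix.fromBlocks_apply₂₁, Matrix.conjTranspose_apply, ← hM r' r, star_sum]
        refine Finset.sum_congr rfl fun i _ => ?_
        simp only [hzdef, Sum.elim_inl, Sum.elim_inr, star_mul', star_star, Complex.star_def,
          Complex.conj_ofReal]
        linear_combination (-(((w i : ℝ):ℂ) * ((starRingEnd ℂ) (xv i r')
          * (starRingEnd ℂ) (yv i r)))) * hscc'C
      · rw [hFentry]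
        simp only [Matrix.fromBlocks_apply₂₂, hQmdef, Matrix.of_apply, hzdef, Sum.elim_inr]
        rw [Finset.mul_sum]
        refine Finset.sum_congr rfl fun i _ => ?_
        rw [star_mul', Complex.star_def, Complex.conj_ofReal, Complex.conj_conj]
        linear_combination (-((w i:ℂ) * ((starRingEnd ℂ) (yv i r) * yv i r'))) * hsc'C
    have hPmtr : Pm.trace.re ≤ c * X := by
      have h1 : Pm.trace = (((c * ∑ i, w i * ∑ r, Complex.normSq (xv i r)) : ℝ) : ℂ) := by
        rw [Matrix.trace]
        simp only [Matrix.diag_apply, hPmdef, Matrix.of_apply]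
        rw [← Finset.mul_sum, Finset.sum_comm]
        push_cast
        congr 1
        refine Finset.sum_congr rfl fun i _ => ?_
        rw [Finset.mul_sum]
        refine Finset.sum_congr rfl fun r _ => ?_
        rw [Complex.star_def, Complex.mul_conj]
      rw [h1, Complex.ofReal_re]
      have h2 : ∑ i, w i * ∑ r, Complex.normSq (xv i r) ≤ X := by
        calc ∑ i, w i * ∑ r, Complex.normSq (xv i r) ≤ ∑ i, w i * X :=
              Finset.sum_le_sum fun i _ => mul_le_mul_of_nonneg_left (hxnorm i) (hw0 i)
          _ = X := by rw [← Finset.sum_mul, hw1, one_mul]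
      exact mul_le_mul_of_nonneg_left h2 hc.le
    have hQmtr : Qm.trace.re ≤ c⁻¹ * Y := by
      have h1 : Qm.trace = (((c⁻¹ * ∑ i, w i * ∑ r, Complex.normSq (yv i r)) : ℝ) : ℂ) := by
        rw [Matrix.trace]
        simp only [Matrix.diag_apply, hQmdef, Matrix.of_apply]
        rw [← Finset.mul_sum, Finset.sum_comm]
        push_cast
        congr 1
        refine Finset.sum_congr rfl fun i _ => ?_
        rw [Finset.mul_sum]
        refine Finset.sum_congr rfl fun r _ => ?_
        rw [Complex.star_def, mul_comm ((starRingEnd ℂ) (yv i r)), Complex.mul_conj]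
      rw [h1, Complex.ofReal_re]
      have h2 : ∑ i, w i * ∑ r, Complex.normSq (yv i r) ≤ Y := by
        calc ∑ i, w i * ∑ r, Complex.normSq (yv i r) ≤ ∑ i, w i * Y :=
              Finset.sum_le_sum fun i _ => mul_le_mul_of_nonneg_left (hynorm i) (hw0 i)
          _ = Y := by rw [← Finset.sum_mul, hw1, one_mul]
      exact mul_le_mul_of_nonneg_left h2 hcinv.le
    have hmain := traceNorm_le_of_posSemidef_fromBlocks Mmat Pm Qm
      (by rw [hFblocks]; exact hFpsd)
    refine le_trans hmain ?_
    have h9 := add_le_add hPmtr hQmtr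
    exact (div_le_div_iff_of_pos_right (by norm_num : (0:ℝ) < 2)).mpr h9
  by_cases hX : X = 0
  · have h0 : traceNorm Mmat ≤ 0 := by
      have h1 : ∀ ε : ℝ, 0 < ε → traceNorm Mmat ≤ 0 + ε := by
        intro ε hε
        have hY1 : (0:ℝ) < Y + 1 := by linarith
        have hkey := key ((Y+1)/(2*ε)) (by positivity)
        rw [hX, mul_zero, zero_add] at hkey
        have h2 : ((Y + 1) / (2 * ε))⁻¹ * Y / 2 = ε * (Y / (Y + 1)) := by
          rw [inv_div]
          field_simp
        have h3 : Y / (Y + 1) ≤ 1 := by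
          rw [div_le_one hY1]
          linarith
        have h4 : ε * (Y / (Y + 1)) ≤ ε := by
          nlinarith [div_nonneg hYnn hY1.le]
        rw [zero_add]
        calc traceNorm Mmat ≤ ((Y+1)/(2*ε))⁻¹ * Y / 2 := hkey
          _ = ε * (Y / (Y + 1)) := h2
          _ ≤ ε := h4
      exact le_of_forall_pos_le_add h1
    calc traceNorm Mmat ≤ 0 := h0
      _ ≤ Real.sqrt (X * Y) := Real.sqrt_nonneg _
  · by_cases hY : Y = 0
    · have h0 : traceNorm Mmat ≤ 0 := by
        have h1 : ∀ ε : ℝ, 0 < ε → traceNorm Mmat ≤ 0 + ε := by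
          intro ε hε
          have hX1 : (0:ℝ) < X + 1 := by linarith
          have hkey := key ((2*ε)/(X+1)) (by positivity)
          rw [hY, mul_zero, add_zero] at hkey
          have h2 : (2*ε)/(X+1) * X / 2 = ε * (X / (X + 1)) := by
            field_simp
          have h3 : X / (X + 1) ≤ 1 := by
            rw [div_le_one hX1]
            linarith
          have h4 : ε * (X / (X + 1)) ≤ ε := by
            nlinarith [div_nonneg hXnn hX1.le]
          rw [zero_add]
          calc traceNorm Mmat ≤ (2*ε)/(X+1) * X / 2 := hkey
            _ = ε * (X / (X + 1)) := h2
            _ ≤ ε := h4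
        exact le_of_forall_pos_le_add h1
      calc traceNorm Mmat ≤ 0 := h0
        _ ≤ Real.sqrt (X * Y) := Real.sqrt_nonneg _
    · have hXpos : 0 < X := lt_of_le_of_ne hXnn (Ne.symm hX)
      have hYpos : 0 < Y := lt_of_le_of_ne hYnn (Ne.symm hY)
      have hcpos : 0 < Real.sqrt (Y/X) := Real.sqrt_pos.mpr (div_pos hYpos hXpos)
      have hkey := key _ hcpos
      have e1 : Real.sqrt (Y/X) * X = Real.sqrt (X*Y) := by
        have h5 : Real.sqrt (Y/X) * X = Real.sqrt (Y/X) * (Real.sqrt X * Real.sqrt X) := by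
          rw [Real.mul_self_sqrt hXpos.le]
        rw [h5, ← mul_assoc, ← Real.sqrt_mul (by positivity : (0:ℝ) ≤ Y/X),
          div_mul_cancel₀ _ (ne_of_gt hXpos), ← Real.sqrt_mul hYpos.le, mul_comm Y X]
      have e2 : (Real.sqrt (Y/X))⁻¹ * Y = Real.sqrt (X*Y) := by
        rw [← Real.sqrt_inv, inv_div]
        have h5 : Real.sqrt (X/Y) * Y = Real.sqrt (X/Y) * (Real.sqrt Y * Real.sqrt Y) := by
          rw [Real.mul_self_sqrt hYpos.le]
        rw [h5, ← mul_assoc, ← Real.sqrt_mul (by positivity : (0:ℝ) ≤ X/Y),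
          div_mul_cancel₀ _ (ne_of_gt hYpos), ← Real.sqrt_mul hXpos.le]
      linarith
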